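/- Let K be a field of characteristic not 2, c ∈ K^×, and let τ₃ be the K-automorphism of K(x,y,z) of order 2 defined by τ₃: x ↦ y, y ↦ x, z ↦ c/(xyz). Then K(x,y,z)^⟨τ₃⟩ = K(t₁, t₂, t₃), where t₁ = xy/(x + y), t₂ = (xyz + c/z)/(x + y), and t₃ = (xyz − c/z)/(x − y). -/

import Mathlib

open MvPolynomial IntermediateField

set_option maxHeartbeats 1000000 in
set_option synthInstance.maxHeartbeats 400000 in
theorem fixed_field_tau3 (K F : Type*) [Field K] [Field F]
    [Algebra K F] [Algebra (MvPolynomial (Fin 3) K) F]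
    [IsScalarTower K (MvPolynomial (Fin 3) K) F]
    [IsFractionRing (MvPolynomial (Fin 3) K) F]
    (h2 : (2 : K) ≠ 0) (c : K) (hc : c ≠ 0)
    (x y z : F)
    (hx : x = algebraMap (MvPolynomial (Fin 3) K) F (X 0))
    (hy : y = algebraMap (MvPolynomial (Fin 3) K) F (X 1))
    (hz : z = algebraMap (MvPolynomial (Fin 3) K) F (X 2))
    (τ : F ≃ₐ[K] F)
    (hτx : τ x = y) (hτy : τ y = x) (hτz : τ z = algebraMap K F c / (x * y * z)) :
    fixedField (Subgroup.zpowers τ) =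
      adjoin K {x * y / (x + y),
                (x * y * z + algebraMap K F c / z) / (x + y),
                (x * y * z - algebraMap K F c / z) / (x - y)} := by
  -- notation
  set j : MvPolynomial (Fin 3) K →+* F := (algebraMap (MvPolynomial (Fin 3) K) F) with hj
  have hinj : Function.Injective j := IsFractionRing.injective _ _
  have hKinj : Function.Injective (algebraMap K F) := (algebraMap K F).injective
  set C' : F := algebraMap K F c with hC'
  -- basic nonvanishing facts
  have hjne : ∀ p : MvPolynomial (Fin 3) K, p ≠ 0 → j p ≠ 0 := by
    intro p hp h
    exact hp (hinj (by simpa using h))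
  have hx0 : x ≠ 0 := by rw [hx]; exact hjne _ (X_ne_zero 0)
  have hy0 : y ≠ 0 := by rw [hy]; exact hjne _ (X_ne_zero 1)
  have hz0 : z ≠ 0 := by rw [hz]; exact hjne _ (X_ne_zero 2)
  have hC0 : C' ≠ 0 := by
    rw [hC']
    intro h
    exact hc (hKinj (by rw [h, map_zero]))
  have h2F : (2 : F) ≠ 0 := by
    intro h
    apply h2
    apply hKinj
    rw [map_ofNat, map_zero]
    exact h
  have h4F : (4 : F) ≠ 0 := by
    intro h
    apply h2F
    have : (4 : F) = 2 * 2 := by norm_num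
    rcases mul_eq_zero.1 (this ▸ h) with h' | h' <;> exact h'
  have hCalg : C' = j (MvPolynomial.C c) := by
    rw [hC', hj, IsScalarTower.algebraMap_apply K (MvPolynomial (Fin 3) K) F,
      MvPolynomial.algebraMap_eq]
  have hxy0 : x + y ≠ 0 := by
    rw [hx, hy, ← map_add]
    apply hjne
    intro h
    have := congrArg (eval (fun i : Fin 3 => if i = 0 then (1 : K) else 0)) h
    simp at this
  have hxmy0 : x - y ≠ 0 := by
    rw [hx, hy, ← map_sub]
    apply hjne
    intro h
    have := congrArg (eval (fun i : Fin 3 => if i = 0 then (1 : K) else 0)) h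
    simp at this
  have hxny : x ≠ y := sub_ne_zero.1 hxmy0
  have hA0 : x ^ 2 * z ^ 2 - C' ≠ 0 := by
    rw [hx, hz, hCalg, ← map_pow, ← map_pow, ← map_mul, ← map_sub]
    apply hjne
    intro h
    have := congrArg (eval (fun _ : Fin 3 => (0 : K))) h
    simp at this
    exact hc this
  have hB0 : C' - y ^ 2 * z ^ 2 ≠ 0 := by
    rw [hy, hz, hCalg, ← map_pow, ← map_pow, ← map_mul, ← map_sub]
    apply hjne
    intro h
    have := congrArg (eval (fun _ : Fin 3 => (0 : K))) h
    simp at this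
    exact hc this
  have hτC : τ C' = C' := by rw [hC']; exact τ.commutes c
  have hyx0 : y + x ≠ 0 := by rwa [add_comm]
  have hymx0 : y - x ≠ 0 := fun h => hxny (sub_eq_zero.1 h).symm
  -- τ is an involution
  have hτj : ∀ p : MvPolynomial (Fin 3) K, τ (τ (j p)) = j p := by
    intro p
    induction p using MvPolynomial.induction_on with
    | C a =>
        have h : j (MvPolynomial.C a) = algebraMap K F a := by
          rw [hj, ← MvPolynomial.algebraMap_eq, ← IsScalarTower.algebraMap_apply]
        rw [h, τ.commutes, τ.commutes]
    | add p q hp hq => rw [map_add, map_add, map_add, hp, hq]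
    | mul_X p i hp =>
        rw [map_mul, map_mul, map_mul, hp]
        congr 1
        fin_cases i
        · show τ (τ (j (X 0))) = j (X 0)
          rw [← hx, hτx, hτy]
        · show τ (τ (j (X 1))) = j (X 1)
          rw [← hy, hτy, hτx]
        · show τ (τ (j (X 2))) = j (X 2)
          rw [← hz, hτz]
          simp only [map_div₀, map_mul, hτx, hτy, hτz, hτC]
          field_simp [hx0, hy0, hz0, hC0]
  have hτinv : ∀ a : F, τ (τ a) = a := by
    intro a
    obtain ⟨p, q, -, ha⟩ := IsFractionRing.div_surjective (A := MvPolynomial (Fin 3) K) a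
    rw [← ha, ← hj, map_div₀, map_div₀, hτj, hτj]
  have hτ2 : τ ^ 2 = 1 := by
    ext a
    rw [pow_two, AlgEquiv.mul_apply, hτinv, AlgEquiv.one_apply]
  have hτne : τ ≠ 1 := by
    intro h
    rw [h] at hτx
    exact hxny hτx
  have horder : orderOf τ = 2 := orderOf_eq_prime hτ2 hτne
  have hfinord : Nat.card (Subgroup.zpowers τ) = 2 := by
    rw [Nat.card_zpowers, horder]
  haveI hfin : Finite (Subgroup.zpowers τ) :=
    Nat.finite_of_card_ne_zero (by rw [hfinord]; norm_num)
  haveI : Fintype (Subgroup.zpowers τ) := Fintype.ofFinite _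
  -- the degree of F over the fixed field is 2
  have hMrank : Module.finrank (fixedField (Subgroup.zpowers τ)) F = 2 := by
    have h := FixedPoints.finrank_eq_card (Subgroup.zpowers τ) F
    rw [← Nat.card_eq_fintype_card, hfinord] at h
    exact h
  -- generators
  set t₁ : F := x * y / (x + y) with ht₁
  set t₂ : F := (x * y * z + C' / z) / (x + y) with ht₂
  set t₃ : F := (x * y * z - C' / z) / (x - y) with ht₃
  set L : IntermediateField K F := adjoin K {t₁, t₂, t₃} with hL
  have ht₁L : t₁ ∈ L := subset_adjoin _ _ (by simp)
  have ht₂L : t₂ ∈ L := subset_adjoin _ _ (by simp)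
  have ht₃L : t₃ ∈ L := subset_adjoin _ _ (by simp)
  have hCL : C' ∈ L := L.algebraMap_mem c
  -- L is contained in the fixed field
  have hfix : ∀ a : F, τ a = a → a ∈ fixedField (Subgroup.zpowers τ) := by
    intro a ha
    have hst : Subgroup.zpowers τ ≤ MulAction.stabilizer (F ≃ₐ[K] F) a :=
      Subgroup.zpowers_le.mpr ha
    rintro ⟨g, hg⟩
    exact hst hg
  have hle : L ≤ fixedField (Subgroup.zpowers τ) := by
    rw [hL, adjoin_le_iff]
    rintro t (rfl | rfl | rfl)
    · apply hfix
      rw [ht₁]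
      simp only [map_div₀, map_add, map_mul, hτx, hτy]
      ring_nf
    · apply hfix
      rw [ht₂]
      simp only [map_div₀, map_add, map_mul, hτx, hτy, hτz, hτC]
      field_simp [hx0, hy0, hz0, hC0, hxy0, hyx0]
      ring
    · apply hfix
      rw [ht₃]
      simp only [map_div₀, map_add, map_sub, map_mul, hτx, hτy, hτz, hτC]
      field_simp [hx0, hy0, hz0, hC0, hxmy0, hymx0]
      ring
  -- key identity: t₂² - t₃² ≠ 0
  have ht2t3 : t₂ ^ 2 - t₃ ^ 2 ≠ 0 := by
    have hfac : (t₂ ^ 2 - t₃ ^ 2) * ((x + y) ^ 2 * (x - y) ^ 2 * z ^ 2) =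
        4 * x * y * (C' - y ^ 2 * z ^ 2) * (x ^ 2 * z ^ 2 - C') := by
      rw [ht₂, ht₃]
      field_simp [hx0, hy0, hz0, hC0, hxy0, hxmy0]
      ring
    intro h
    rw [h, zero_mul] at hfac
    exact (mul_ne_zero (mul_ne_zero (mul_ne_zero (mul_ne_zero h4F hx0) hy0) hB0) hA0) hfac.symm
  -- x + y and x * y belong to L
  have hsval : x + y = 4 * t₁ * (C' - t₃ ^ 2) / (t₂ ^ 2 - t₃ ^ 2) := by
    rw [eq_div_iff ht2t3, ht₁, ht₂, ht₃]
    field_simp [hx0, hy0, hz0, hC0, hxy0, hxmy0]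
    ring
  have hsL : x + y ∈ L := by
    rw [hsval]
    exact div_mem (mul_mem (mul_mem (ofNat_mem L 4) ht₁L)
      (sub_mem hCL (pow_mem ht₃L 2))) (sub_mem (pow_mem ht₂L 2) (pow_mem ht₃L 2))
  have hpval : x * y = t₁ * (x + y) := by
    rw [ht₁]; field_simp
  have hpL : x * y ∈ L := by
    rw [hpval]; exact mul_mem ht₁L hsL
  have hzval : z = (t₂ * (x + y) + t₃ * (x - y)) / (2 * (x * y)) := by
    rw [eq_div_iff (mul_ne_zero h2F (mul_ne_zero hx0 hy0)), ht₂, ht₃]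
    field_simp [hx0, hy0, hz0, hC0, hxy0, hxmy0]
    ring
  -- x is quadratic over L
  set q : Polynomial L := Polynomial.X ^ 2 - Polynomial.C (⟨x + y, hsL⟩ : L) * Polynomial.X +
      Polynomial.C (⟨x * y, hpL⟩ : L) with hqdef
  have hqmonic : q.Monic := by
    have h : q = Polynomial.X ^ 2 +
        (Polynomial.C (⟨x * y, hpL⟩ : L) - Polynomial.C (⟨x + y, hsL⟩ : L) * Polynomial.X) := by
      rw [hqdef]; ring
    rw [h]
    apply Polynomial.monic_X_pow_add
    have hd : (Polynomial.C (⟨x * y, hpL⟩ : L) -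
        Polynomial.C (⟨x + y, hsL⟩ : L) * Polynomial.X).degree ≤ 1 := by
      apply le_trans (Polynomial.degree_sub_le _ _)
      apply max_le
      · exact le_trans Polynomial.degree_C_le (by norm_num)
      · exact le_trans (Polynomial.degree_C_mul_X_le _) le_rfl
    exact lt_of_le_of_lt hd (by norm_num)
  have haq : Polynomial.aeval x q = 0 := by
    rw [hqdef]
    rw [map_add, map_sub, map_mul, map_pow, Polynomial.aeval_X, Polynomial.aeval_C,
      Polynomial.aeval_C]
    show x ^ 2 - (x + y) * x + x * y = 0
    ring
  have hint : IsIntegral L x := ⟨q, hqmonic, by rwa [Polynomial.aeval_def] at haq⟩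
  have hqdeg : q.natDegree ≤ 2 := by
    rw [hqdef]
    compute_degree
  have hdeg : (minpoly L x).natDegree ≤ 2 := by
    have hdvd := minpoly.dvd L x haq
    exact le_trans (Polynomial.natDegree_le_of_dvd hdvd hqmonic.ne_zero) hqdeg
  -- F = L(x)
  have htop : IntermediateField.adjoin (↥L) {x} = ⊤ := by
    set A := IntermediateField.adjoin (↥L) {x} with hA
    have hxA : x ∈ A := subset_adjoin _ _ rfl
    have hLmem : ∀ a : F, a ∈ L → a ∈ A := by
      intro a ha
      have h := A.algebraMap_mem (⟨a, ha⟩ : L)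
      simpa [IntermediateField.algebraMap_apply] using h
    have hyA : y ∈ A := by
      have h : y = (x + y) - x := by ring
      rw [h]; exact sub_mem (hLmem _ hsL) hxA
    have hzA : z ∈ A := by
      rw [hzval]
      exact div_mem (add_mem (mul_mem (hLmem _ ht₂L) (hLmem _ hsL))
        (mul_mem (hLmem _ ht₃L) (sub_mem hxA hyA)))
        (mul_mem (ofNat_mem A 2) (mul_mem hxA hyA))
    have hjmem : ∀ p : MvPolynomial (Fin 3) K, j p ∈ A := by
      intro p
      induction p using MvPolynomial.induction_on with
      | C a =>
          have h : j (MvPolynomial.C a) = algebraMap K F a := by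
            rw [hj, ← MvPolynomial.algebraMap_eq, ← IsScalarTower.algebraMap_apply]
          rw [h]
          exact hLmem _ (L.algebraMap_mem a)
      | add p q hp hq => rw [map_add]; exact add_mem hp hq
      | mul_X p i hp =>
          rw [map_mul]
          apply mul_mem hp
          fin_cases i
          · show j (X 0) ∈ A
            rw [← hx]; exact hxA
          · show j (X 1) ∈ A
            rw [← hy]; exact hyA
          · show j (X 2) ∈ A
            rw [← hz]; exact hzA
    rw [eq_top_iff]
    rintro a -
    obtain ⟨p, q', -, ha⟩ := IsFractionRing.div_surjective (A := MvPolynomial (Fin 3) K) a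
    rw [← ha, ← hj]
    exact div_mem (hjmem p) (hjmem q')
  haveI hfd : FiniteDimensional L F := by
    have h := IntermediateField.adjoin.finiteDimensional hint
    rw [htop] at h
    exact (IntermediateField.topEquiv (F := ↥L) (E := F)).toLinearEquiv.finiteDimensional
  have hLrank : Module.finrank L F ≤ 2 := by
    have h1 := IntermediateField.adjoin.finrank hint
    rw [htop] at h1
    have h2' := (IntermediateField.topEquiv (F := ↥L) (E := F)).toLinearEquiv.finrank_eq
    rw [h2'] at h1
    rw [h1]
    exact hdeg
  exact (IntermediateField.eq_of_le_of_finrank_le' hle (by rw [hMrank]; exact hLrank)).symm
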